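/- Let R be a ring and let Σ = {s_ijk : i,j,k ∈ {1,…,n}} be a set of central elements of R satisfying s_iik = 1 = s_ikk and s_ijk · s_ikℓ = s_ijℓ · s_jkℓ for all i,j,k,ℓ. Then the set K of n×n matrices over R with the usual addition and with multiplication (AB)_ij = Σ_k s_ikj · a_ik · b_kj is an associative ring with identity (the identity matrix). -/
import Mathlib


/-- For a multiplier system `s` over a ring `R`, the set of `n × n`
matrices over `R` with usual addition and multiplication
`(A*B) i j = ∑ k, s i k j * A i k * B k j` is an associative ring whose identity
is the identity matrix. -/
theorem formal_matrix_ring_structure {R : Type*} [Ring R] (n : ℕ) (hn : 2 ≤ n)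
    (s : Fin n → Fin n → Fin n → R)
    (hcent : ∀ i j k (r : R), s i j k * r = r * s i j k)
    (h1 : ∀ i k, s i i k = 1) (h2 : ∀ i k, s i k k = 1)
    (hmul : ∀ i j k l, s i j k * s i k l = s i j l * s j k l)
    (fmul : Matrix (Fin n) (Fin n) R → Matrix (Fin n) (Fin n) R → Matrix (Fin n) (Fin n) R)
    (hfmul : ∀ A B i j, fmul A B i j = ∑ k, s i k j * A i k * B k j) :
    (∀ A B C, fmul (fmul A B) C = fmul A (fmul B C)) ∧
    (∀ A, fmul 1 A = A) ∧ (∀ A, fmul A 1 = A) ∧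
    (∀ A B C, fmul A (B + C) = fmul A B + fmul A C) ∧
    (∀ A B C, fmul (A + B) C = fmul A C + fmul B C) := by
  refine ⟨?_, ?_, ?_, ?_, ?_⟩
  · intro A B C
    ext i j
    simp only [hfmul, Finset.mul_sum, Finset.sum_mul]
    rw [Finset.sum_comm]
    refine Finset.sum_congr rfl fun k _ => Finset.sum_congr rfl fun x _ => ?_
    -- goal: s i x j * (s i k x * A i k * B k x) * C x j
    --     = s i k j * A i k * (s k x j * B k x * C x j)
    rw [← mul_assoc, ← mul_assoc, ← mul_assoc, ← mul_assoc,
      hcent i x j (s i k x), hmul i k x j,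
      mul_assoc (s i k j) (s k x j) (A i k), hcent k x j (A i k),
      ← mul_assoc]
  · intro A
    ext i j
    rw [hfmul]
    rw [Finset.sum_eq_single i]
    · simp [h1]
    · intro b _ hb
      simp [Matrix.one_apply_ne' hb]
    · simp
  · intro A
    ext i j
    rw [hfmul]
    rw [Finset.sum_eq_single j]
    · simp [h2]
    · intro b _ hb
      simp [Matrix.one_apply_ne hb]
    · simp
  · intro A B C
    ext i j
    simp [hfmul, Matrix.add_apply, mul_add, Finset.sum_add_distrib]
  · intro A B C
    ext i j
    simp [hfmul, Matrix.add_apply, mul_add, add_mul, Finset.sum_add_distrib]
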